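/- Let P = B ∪ R be a doubly collinear point set with |B| = |R| = n, and let l_B' be one of the two half-lines of l_B (a connected component of l_B \ {x}). Let r, r' ∈ R be such that r lies strictly between x and r' on l_R. Suppose b ∈ B ∩ l_B' minimizes dist(r, ·) among all points of B ∩ l_B' forming a feasible edge with r, and b' ∈ B ∩ l_B' minimizes dist(r', ·) among all points of B ∩ l_B' forming a feasible edge with r'. Then b' = b or b lies strictly between x and b' on l_B. -/

import Mathlib

noncomputable section

open scoped InnerProductSpace

/-- The Euclidean plane. -/
abbrev Pt : Type := EuclideanSpace ℝ (Fin 2)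

/-- The determinant of two plane vectors (twice the signed area). -/
def det2 (u v : Pt) : ℝ := u 0 * v 1 - u 1 * v 0

/-- The open half-line starting at `x` with direction `u`. -/
def halfLine (x u : Pt) : Set Pt := {y | ∃ t : ℝ, 0 < t ∧ y = x + t • u}

/-- The open half-line starting at `a` and passing through `c` (it contains `c`). -/
def rayThrough (a c : Pt) : Set Pt := {y | ∃ s : ℝ, 0 < s ∧ y = a + s • (c - a)}

/-- `σ` encodes a bichromatic perfect non-crossing matching of the blue points `B` and the red
points `R`: it restricts to a bijection from `R` onto `B`, and the closed segments induced by
two distinct edges are disjoint. -/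
def IsBM (B R : Finset Pt) (σ : Pt → Pt) : Prop :=
  Set.BijOn σ (↑R) (↑B) ∧
  (∀ r ∈ R, ∀ r' ∈ R, r ≠ r' →
    segment ℝ r (σ r) ∩ segment ℝ r' (σ r') = ∅)

/-- The bichromatic edge `{r, b}` is feasible: some bichromatic perfect non-crossing matching
of `B ∪ R` contains it. -/
def BFeasible (B R : Finset Pt) (r b : Pt) : Prop :=
  ∃ σ, IsBM B R σ ∧ σ r = b

set_option maxHeartbeats 1000000
section Aux




section
variable {u v x : Pt}

/-- blue coordinate -/
def cB (u v x y : Pt) : ℝ := det2 (y - x) v / det2 u v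
/-- red coordinate -/
def cR (u v x y : Pt) : ℝ := det2 u (y - x) / det2 u v

lemma cB_param (h : det2 u v ≠ 0) (s : ℝ) : cB u v x (x + s•u) = s := by
  have : det2 (x + s•u - x) v = s * det2 u v := by
    simp [det2]; ring
  rw [cB, this, mul_div_assoc, div_self h, mul_one]

lemma cR_param (h : det2 u v ≠ 0) (t : ℝ) : cR u v x (x + t•v) = t := by
  have : det2 u (x + t•v - x) = t * det2 u v := by
    simp [det2]; ring
  rw [cR, this, mul_div_assoc, div_self h, mul_one]

lemma seg_param {t s : ℝ} {y : Pt} (hy : y ∈ segment ℝ (x + t•v) (x + s•u)) :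
    ∃ l : ℝ, 0 ≤ l ∧ l ≤ 1 ∧ y = x + ((1-l)*t)•v + (l*s)•u := by
  rw [segment_eq_image] at hy
  obtain ⟨l, hl, hly⟩ := hy
  refine ⟨l, hl.1, hl.2, ?_⟩
  rw [← hly]
  simp [smul_add, smul_smul]
  module
end



section
variable {u v x : Pt}

lemma comb_eq (h : det2 u v ≠ 0) {a b c d : ℝ} (hE : a•v + b•u = c•v + d•u) : a = c ∧ b = d := by
  have h0 := congrArg (fun w : Pt => w 0) hE
  have h1 := congrArg (fun w : Pt => w 1) hE
  simp only [PiLp.add_apply, PiLp.smul_apply, smul_eq_mul] at h0 h1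
  have hac : a = c := by
    have key : (a - c) * det2 u v = 0 := by
      simp only [det2]; linear_combination u 0 * h1 - u 1 * h0
    rcases mul_eq_zero.1 key with h' | h'
    · linarith
    · exact absurd h' h
  refine ⟨hac, ?_⟩
  subst hac
  have e0 : (d - b) * u 0 = 0 := by linarith
  have e1 : (d - b) * u 1 = 0 := by linarith
  by_contra hbd
  have hdb : d - b ≠ 0 := fun hh => hbd (by linarith)
  have u0 : u 0 = 0 := by rcases mul_eq_zero.1 e0 with h'|h'; exact absurd h' hdb; exact h'
  have u1 : u 1 = 0 := by rcases mul_eq_zero.1 e1 with h'|h'; exact absurd h' hdb; exact h'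
  exact h (by simp [det2, u0, u1])

lemma point_eq (h : det2 u v ≠ 0) {a b c d : ℝ}
    (hE : x + a•v + b•u = x + c•v + d•u) : a = c ∧ b = d := by
  apply comb_eq h
  have : (x + a•v + b•u) - x = (x + c•v + d•u) - x := by rw [hE]
  calc a•v + b•u = (x + a•v + b•u) - x := by abel
  _ = (x + c•v + d•u) - x := this
  _ = c•v + d•u := by abel

/-- same quadrant, monotone ⇒ disjoint -/
lemma SEG1 (h : det2 u v ≠ 0) {t₁ t₂ s₁ s₂ : ℝ} (ht₁ : 0 < t₁) (ht : t₁ < t₂)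
    (hs₁ : 0 < s₁) (hs : s₁ < s₂) :
    segment ℝ (x + t₁•v) (x + s₁•u) ∩ segment ℝ (x + t₂•v) (x + s₂•u) = ∅ := by
  rw [Set.eq_empty_iff_forall_notMem]
  rintro y ⟨hy1, hy2⟩
  obtain ⟨l, hl0, hl1, hy⟩ := seg_param hy1
  obtain ⟨m, hm0, hm1, hy'⟩ := seg_param hy2
  obtain ⟨e1, e2⟩ := point_eq h (hy ▸ hy')
  -- e1 : (1-l)*t₁ = (1-m)*t₂, e2 : l*s₁ = m*s₂
  rcases le_or_gt l m with hlm | hlm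
  · -- l ≤ m : l*s₁ ≤ m*s₁ < m*s₂ unless m = 0
    rcases eq_or_lt_of_le hm0 with hm0' | hm0'
    · -- m = 0 : l*s₁ = 0 ⇒ l = 0 ⇒ t₁ = t₂
      have hl' : l = 0 := le_antisymm (by linarith) hl0
      rw [← hm0', hl'] at e1; simp at e1; linarith
    · nlinarith
  · -- m < l : (1-l)*t₁ < (1-m)*t₂ unless 1-l ... 
    have h1l : 0 ≤ 1 - l := by linarith
    have h1m : 0 < 1 - m := by linarith
    nlinarith

/-- blue points on opposite sides ⇒ disjoint -/
lemma SEG2 (h : det2 u v ≠ 0) {t₁ t₂ s₁ s₂ : ℝ} (ht : t₁ ≠ t₂)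
    (hs₁ : 0 < s₁) (hs₂ : s₂ < 0) :
    segment ℝ (x + t₁•v) (x + s₁•u) ∩ segment ℝ (x + t₂•v) (x + s₂•u) = ∅ := by
  rw [Set.eq_empty_iff_forall_notMem]
  rintro y ⟨hy1, hy2⟩
  obtain ⟨l, hl0, hl1, hy⟩ := seg_param hy1
  obtain ⟨m, hm0, hm1, hy'⟩ := seg_param hy2
  obtain ⟨e1, e2⟩ := point_eq h (hy ▸ hy')
  have hls : 0 ≤ l * s₁ := mul_nonneg hl0 hs₁.le
  have hms : m * s₂ ≤ 0 := mul_nonpos_of_nonneg_of_nonpos hm0 hs₂.le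
  have hl' : l = 0 := by nlinarith
  have hm' : m = 0 := by nlinarith
  rw [hl', hm'] at e1; simp at e1; exact ht e1

/-- red points on opposite sides ⇒ disjoint -/
lemma SEG3 (h : det2 u v ≠ 0) {t₁ t₂ s₁ s₂ : ℝ} (ht₁ : 0 < t₁) (ht₂ : t₂ < 0)
    (hs : s₁ ≠ s₂) :
    segment ℝ (x + t₁•v) (x + s₁•u) ∩ segment ℝ (x + t₂•v) (x + s₂•u) = ∅ := by
  rw [Set.eq_empty_iff_forall_notMem]
  rintro y ⟨hy1, hy2⟩
  obtain ⟨l, hl0, hl1, hy⟩ := seg_param hy1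
  obtain ⟨m, hm0, hm1, hy'⟩ := seg_param hy2
  obtain ⟨e1, e2⟩ := point_eq h (hy ▸ hy')
  have h1 : 0 ≤ (1-l) * t₁ := mul_nonneg (by linarith) ht₁.le
  have h2 : (1-m) * t₂ ≤ 0 := mul_nonpos_of_nonneg_of_nonpos (by linarith) ht₂.le
  have hl' : l = 1 := by nlinarith
  have hm' : m = 1 := by nlinarith
  rw [hl', hm'] at e2; simp at e2; exact hs e2

/-- same quadrant, inverted ⇒ intersect -/
lemma SEGX (h : det2 u v ≠ 0) {t₁ t₂ s₁ s₂ : ℝ} (ht₁ : 0 < t₁) (ht : t₁ < t₂)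
    (hs₂ : 0 < s₂) (hs : s₂ < s₁) :
    (segment ℝ (x + t₁•v) (x + s₁•u) ∩ segment ℝ (x + t₂•v) (x + s₂•u)).Nonempty := by
  set d : ℝ := s₁*t₂ - s₂*t₁ with hd
  have hdpos : 0 < d := by nlinarith
  set l : ℝ := s₂*(t₂-t₁)/d with hl
  set m : ℝ := s₁*(t₂-t₁)/d with hm
  have hl0 : 0 ≤ l := div_nonneg (by nlinarith) hdpos.le
  have hm0 : 0 ≤ m := div_nonneg (by nlinarith) hdpos.le
  have hl1 : l ≤ 1 := by rw [hl, div_le_one hdpos]; nlinarith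
  have hm1 : m ≤ 1 := by rw [hm, div_le_one hdpos]; nlinarith
  refine ⟨x + ((1-l)*t₁)•v + (l*s₁)•u, ?_, ?_⟩
  · rw [segment_eq_image]
    exact ⟨l, ⟨hl0, hl1⟩, by simp [smul_add, smul_smul]; module⟩
  · rw [segment_eq_image]
    refine ⟨m, ⟨hm0, hm1⟩, ?_⟩
    have e1 : (1-m)*t₂ = (1-l)*t₁ := by
      have hdne : d ≠ 0 := hdpos.ne'
      have hmd : m * d = s₁*(t₂-t₁) := by rw [hm]; exact div_mul_cancel₀ _ hdne
      have hld : l * d = s₂*(t₂-t₁) := by rw [hl]; exact div_mul_cancel₀ _ hdne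
      apply mul_right_cancel₀ hdne
      linear_combination (-t₂)*hmd + t₁*hld + (t₂-t₁)*hd
    have e2 : m*s₂ = l*s₁ := by field_simp [hl, hm]; ring
    rw [← e1, ← e2]
    simp [smul_add, smul_smul]; module
end



open scoped Classical

/-- rank of `t` in finset `A` -/
def rnk (A : Finset ℝ) (t : ℝ) : ℕ := (A.filter (· < t)).card

lemma rnk_lt_card {A : Finset ℝ} {t : ℝ} (ht : t ∈ A) : rnk A t < A.card := by
  apply Finset.card_lt_card
  rw [Finset.ssubset_iff_of_subset (Finset.filter_subset _ _)]
  exact ⟨t, ht, by simp⟩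

lemma rnk_lt_rnk {A : Finset ℝ} {t t' : ℝ} (ht : t ∈ A) (ht' : t' ∈ A) (h : t < t') :
    rnk A t < rnk A t' := by
  apply Finset.card_lt_card
  constructor
  · intro z hz
    simp only [Finset.mem_filter] at hz ⊢
    exact ⟨hz.1, lt_trans hz.2 h⟩
  · intro hsub
    have := hsub (by simp [ht, h] : t ∈ A.filter (· < t'))
    simp at this

lemma rnk_lt_iff {A : Finset ℝ} {t t' : ℝ} (ht : t ∈ A) (ht' : t' ∈ A) :
    rnk A t < rnk A t' ↔ t < t' := by
  constructor
  · intro h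
    rcases lt_trichotomy t t' with h'|h'|h'
    · exact h'
    · subst h'; omega
    · exact absurd (rnk_lt_rnk ht' ht h') (by omega)
  · exact rnk_lt_rnk ht ht'

lemma rnk_injOn {A : Finset ℝ} {t t' : ℝ} (ht : t ∈ A) (ht' : t' ∈ A)
    (h : rnk A t = rnk A t') : t = t' := by
  rcases lt_trichotomy t t' with h'|h'|h'
  · have := rnk_lt_rnk ht ht' h'; omega
  · exact h'
  · have := rnk_lt_rnk ht' ht h'; omega

lemma rnk_image (A : Finset ℝ) : A.image (rnk A) = Finset.range A.card := by
  apply Finset.eq_of_subset_of_card_le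
  · intro k hk
    simp only [Finset.mem_image] at hk
    obtain ⟨t, ht, rfl⟩ := hk
    simpa using rnk_lt_card ht
  · rw [Finset.card_range, Finset.card_image_of_injOn (fun a ha b hb => rnk_injOn ha hb)]

lemma rnk_filter_card (A : Finset ℝ) (p : ℕ → Prop) [DecidablePred p] :
    (A.filter (fun t => p (rnk A t))).card = ((Finset.range A.card).filter p).card := by
  rw [← rnk_image, Finset.filter_image]
  rw [Finset.card_image_of_injOn]
  intro a ha b hb
  simp only [Finset.mem_coe, Finset.mem_filter] at ha hb
  exact rnk_injOn ha.1 hb.1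

/-- inverse of rank -/
def unrk (B : Finset ℝ) (k : ℕ) : ℝ :=
  if h : ∃ s ∈ B, rnk B s = k then h.choose else 0

lemma unrk_spec {B : Finset ℝ} {k : ℕ} (hk : k < B.card) :
    unrk B k ∈ B ∧ rnk B (unrk B k) = k := by
  have : k ∈ B.image (rnk B) := by rw [rnk_image]; simpa using hk
  simp only [Finset.mem_image] at this
  obtain ⟨t, ht, hkt⟩ := this
  have hex : ∃ s ∈ B, rnk B s = k := ⟨t, ht, hkt⟩
  rw [unrk, dif_pos hex]
  exact ⟨hex.choose_spec.1, hex.choose_spec.2⟩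

lemma unrk_rnk {B : Finset ℝ} {t : ℝ} (ht : t ∈ B) : unrk B (rnk B t) = t := by
  have h := unrk_spec (rnk_lt_card ht)
  exact rnk_injOn h.1 ht h.2

/-- monotone matching map -/
def mmap (A B : Finset ℝ) : ℝ → ℝ := fun t => unrk B (rnk A t)
/-- antitone matching map -/
def amap (A B : Finset ℝ) : ℝ → ℝ := fun t => unrk B (B.card - 1 - rnk A t)

section maps
variable {A B : Finset ℝ}

lemma mmap_mem (hc : A.card = B.card) {t : ℝ} (ht : t ∈ A) : mmap A B t ∈ B :=
  (unrk_spec (by rw [← hc]; exact rnk_lt_card ht)).1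

lemma rnk_mmap (hc : A.card = B.card) {t : ℝ} (ht : t ∈ A) : rnk B (mmap A B t) = rnk A t :=
  (unrk_spec (by rw [← hc]; exact rnk_lt_card ht)).2

lemma mmap_lt (hc : A.card = B.card) {t t' : ℝ} (ht : t ∈ A) (ht' : t' ∈ A) (h : t < t') :
    mmap A B t < mmap A B t' := by
  rw [← rnk_lt_iff (mmap_mem hc ht) (mmap_mem hc ht'), rnk_mmap hc ht, rnk_mmap hc ht']
  exact rnk_lt_rnk ht ht' h

lemma mmap_bijOn (hc : A.card = B.card) : Set.BijOn (mmap A B) ↑A ↑B := by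
  refine ⟨fun t ht => mmap_mem hc ht, fun t ht t' ht' h => ?_, fun s hs => ?_⟩
  · simp only [Finset.mem_coe] at ht ht'
    apply rnk_injOn ht ht'
    rw [← rnk_mmap hc ht, ← rnk_mmap hc ht', h]
  · simp only [Finset.mem_coe] at hs ⊢
    have hr : rnk B s < A.card := by rw [hc]; exact rnk_lt_card hs
    refine ⟨unrk A (rnk B s), ?_, ?_⟩
    · simpa using (unrk_spec hr).1
    · rw [mmap, (unrk_spec hr).2, unrk_rnk hs]

lemma amap_mem (hc : A.card = B.card) {t : ℝ} (ht : t ∈ A) : amap A B t ∈ B := by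
  refine (unrk_spec ?_).1
  have := rnk_lt_card ht
  omega

lemma rnk_amap (hc : A.card = B.card) {t : ℝ} (ht : t ∈ A) : rnk B (amap A B t) = B.card - 1 - rnk A t := by
  refine (unrk_spec ?_).2
  have := rnk_lt_card ht
  omega

lemma amap_lt (hc : A.card = B.card) {t t' : ℝ} (ht : t ∈ A) (ht' : t' ∈ A) (h : t < t') :
    amap A B t' < amap A B t := by
  rw [← rnk_lt_iff (amap_mem hc ht') (amap_mem hc ht), rnk_amap hc ht, rnk_amap hc ht']
  have h1 := rnk_lt_card ht
  have h2 := rnk_lt_card ht'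
  have := rnk_lt_rnk ht ht' h
  omega

lemma amap_bijOn (hc : A.card = B.card) : Set.BijOn (amap A B) ↑A ↑B := by
  refine ⟨fun t ht => amap_mem hc ht, fun t ht t' ht' h => ?_, fun s hs => ?_⟩
  · simp only [Finset.mem_coe] at ht ht'
    apply rnk_injOn ht ht'
    have e := rnk_amap hc (A := A) (B := B) ht
    have e' := rnk_amap hc (A := A) (B := B) ht'
    rw [h] at e
    have h1 := rnk_lt_card ht
    have h2 := rnk_lt_card ht'
    omega
  · simp only [Finset.mem_coe] at hs ⊢
    have hrB := rnk_lt_card hs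
    have hr : A.card - 1 - rnk B s < A.card := by omega
    refine ⟨unrk A (A.card - 1 - rnk B s), by simpa using (unrk_spec hr).1, ?_⟩
    rw [amap, (unrk_spec hr).2]
    have : B.card - 1 - (A.card - 1 - rnk B s) = rnk B s := by omega
    rw [this, unrk_rnk hs]
end maps



open scoped Classical



/-- parameters of a point set along direction `v` -/
def prm (u v x : Pt) (R : Finset Pt) : Finset ℝ := R.image (cR u v x)

section
variable {u v x : Pt} {R : Finset Pt}

lemma det2_swap (u v : Pt) : det2 v u = - det2 u v := by simp [det2]; ring

lemma cB_eq_cR (u v x : Pt) : cB u v x = cR v u x := by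
  funext y
  rw [cB, cR, det2_swap v u, det2_swap v (y - x), neg_div_neg_eq]

variable (hd : det2 u v ≠ 0) (hR : ∀ r ∈ R, ∃ t : ℝ, t ≠ 0 ∧ r = x + t • v)

include hd hR

lemma param_pt {r : Pt} (hr : r ∈ R) : r = x + (cR u v x r)•v ∧ cR u v x r ≠ 0 := by
  obtain ⟨t, ht0, rfl⟩ := hR r hr
  rw [cR_param hd]
  exact ⟨rfl, ht0⟩

lemma param_injOn {r r' : Pt} (hr : r ∈ R) (hr' : r' ∈ R)
    (h : cR u v x r = cR u v x r') : r = r' := by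
  have h1 := (param_pt hd hR hr).1
  have h2 := (param_pt hd hR hr').1
  rw [h1, h2, h]

lemma prm_mem {t : ℝ} (ht : t ∈ prm u v x R) : x + t•v ∈ R ∧ t ≠ 0 := by
  obtain ⟨r, hr, rfl⟩ := Finset.mem_image.1 ht
  have := param_pt hd hR hr
  exact ⟨this.1 ▸ hr, this.2⟩

lemma prm_mem' {r : Pt} (hr : r ∈ R) : cR u v x r ∈ prm u v x R :=
  Finset.mem_image_of_mem _ hr

lemma prm_card : (prm u v x R).card = R.card :=
  Finset.card_image_of_injOn (fun a ha b hb h => param_injOn hd hR ha hb h)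

end

/-- Forward direction: ranks of matched pairs in the (+,+) quadrant. -/
lemma FWD {u v x : Pt} {B R : Finset Pt} (hd : det2 u v ≠ 0)
    (hB : ∀ b ∈ B, ∃ t : ℝ, t ≠ 0 ∧ b = x + t • u)
    (hR : ∀ r ∈ R, ∃ t : ℝ, t ≠ 0 ∧ r = x + t • v)
    {σ : Pt → Pt} (hσ : IsBM B R σ) {r : Pt} (hr : r ∈ R)
    (htr : 0 < cR u v x r) (hsb : 0 < cR v u x (σ r)) :
    rnk ((prm u v x R).filter (0 < ·)) (cR u v x r) ≤
      rnk ((prm v u x B).filter (0 < ·)) (cR v u x (σ r)) +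
      ((prm v u x B).filter (· < 0)).card := by
  have hd' : det2 v u ≠ 0 := by rw [det2_swap]; simpa using hd
  set tr := cR u v x r with htrdef
  set sb := cR v u x (σ r) with hsbdef
  set Tp := (prm u v x R).filter (0 < ·) with hTp
  set Sp := (prm v u x B).filter (0 < ·) with hSp
  set Sm := (prm v u x B).filter (· < 0) with hSm
  have key : (Tp.filter (· < tr)).card ≤ ((Sp.filter (· < sb)) ∪ Sm).card := by
    apply Finset.card_le_card_of_injOn (fun t => cR v u x (σ (x + t•v)))
    · -- maps to
      intro t ht
      simp only [hTp, Finset.mem_coe, Finset.mem_filter] at ht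
      obtain ⟨⟨htR, htpos⟩, htlt⟩ := ht
      have hyR : x + t•v ∈ R := (prm_mem hd hR htR).1
      have hcy : σ (x + t•v) ∈ B := hσ.1.mapsTo hyR
      have hsy0 : cR v u x (σ (x + t•v)) ≠ 0 := (param_pt hd' hB hcy).2
      have hsyS : cR v u x (σ (x + t•v)) ∈ prm v u x B := prm_mem' hd' hB hcy
      rcases lt_or_gt_of_ne hsy0 with hneg | hpos
      · exact Finset.mem_union_right _ (by simp only [hSm, Finset.mem_filter]; exact ⟨hsyS, hneg⟩)
      · refine Finset.mem_union_left _ ?_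
        simp only [hSp, Finset.mem_filter]
        refine ⟨⟨hsyS, hpos⟩, ?_⟩
        by_contra hge
        push_neg at hge
        have hyr : (x + t•v) ≠ r := by
          intro hyr
          rw [← hyr, cR_param hd] at htrdef
          linarith [htrdef ▸ htlt]
        have hne : cR v u x (σ (x + t•v)) ≠ sb := by
          intro heq
          exact hyr (hσ.1.injOn hyR hr (param_injOn hd' hB hcy (hσ.1.mapsTo hr) heq))
        have hcross := SEGX (x := x) hd htpos htlt hsb (lt_of_le_of_ne hge (Ne.symm hne))
        have hempty := hσ.2 (x + t•v) hyR r hr hyr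
        rw [← (param_pt hd' hB hcy).1, ← (param_pt hd hR hr).1,
          ← (param_pt hd' hB (hσ.1.mapsTo hr)).1] at hcross
        rw [hempty] at hcross
        exact Set.not_nonempty_empty hcross
    · -- injective
      intro t ht t' ht' heq
      simp only [hTp, Finset.coe_filter, Set.mem_setOf_eq, Finset.mem_filter] at ht ht'
      have hyR : x + t•v ∈ R := (prm_mem hd hR ht.1.1).1
      have hyR' : x + t'•v ∈ R := (prm_mem hd hR ht'.1.1).1
      have := hσ.1.injOn hyR hyR'
        (param_injOn hd' hB (hσ.1.mapsTo hyR) (hσ.1.mapsTo hyR') heq)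
      have : t•v = t'•v := by
        have h2 := congrArg (fun z : Pt => z - x) this
        simpa using h2
      have hv : v ≠ 0 := by intro h0; rw [h0] at hd; simp [det2] at hd
      exact smul_left_injective ℝ hv this
  calc rnk Tp tr = (Tp.filter (· < tr)).card := rfl
  _ ≤ ((Sp.filter (· < sb)) ∪ Sm).card := key
  _ ≤ (Sp.filter (· < sb)).card + Sm.card := Finset.card_union_le _ _
  _ = rnk Sp sb + Sm.card := rfl



open scoped Classical

lemma IsBM_inv {B R : Finset Pt} {σ : Pt → Pt} (hσ : IsBM B R σ) :
    IsBM R B (Function.invFunOn σ ↑R) := by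
  constructor
  · exact Set.BijOn.symm (hσ.1.invOn_invFunOn).symm hσ.1
  · intro c hc c' hc' hne
    set τ := Function.invFunOn σ ↑R with hτ
    have h1 : σ (τ c) = c := hσ.1.invOn_invFunOn.2 hc
    have h2 : σ (τ c') = c' := hσ.1.invOn_invFunOn.2 hc'
    have hm : τ c ∈ R := hσ.1.surjOn.mapsTo_invFunOn hc
    have hm' : τ c' ∈ R := hσ.1.surjOn.mapsTo_invFunOn hc'
    have hne' : τ c ≠ τ c' := fun h => hne (by rw [← h1, ← h2, h])
    have := hσ.2 (τ c) hm (τ c') hm' hne'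
    rw [h1, h2] at this
    rw [segment_symm ℝ c (τ c), segment_symm ℝ c' (τ c')]
    exact this

/-- Both rank inequalities for a matched (+,+) pair. -/
lemma BOTH {u v x : Pt} {B R : Finset Pt} (hd : det2 u v ≠ 0)
    (hB : ∀ b ∈ B, ∃ t : ℝ, t ≠ 0 ∧ b = x + t • u)
    (hR : ∀ r ∈ R, ∃ t : ℝ, t ≠ 0 ∧ r = x + t • v)
    {σ : Pt → Pt} (hσ : IsBM B R σ) {r : Pt} (hr : r ∈ R)
    (htr : 0 < cR u v x r) (hsb : 0 < cR v u x (σ r)) :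
    rnk ((prm u v x R).filter (0 < ·)) (cR u v x r) ≤
      rnk ((prm v u x B).filter (0 < ·)) (cR v u x (σ r)) +
      ((prm v u x B).filter (· < 0)).card ∧
    rnk ((prm v u x B).filter (0 < ·)) (cR v u x (σ r)) ≤
      rnk ((prm u v x R).filter (0 < ·)) (cR u v x r) +
      ((prm u v x R).filter (· < 0)).card := by
  have hd' : det2 v u ≠ 0 := by rw [det2_swap]; simpa using hd
  refine ⟨FWD hd hB hR hσ hr htr hsb, ?_⟩
  have hinv := IsBM_inv hσ
  have hbB : σ r ∈ B := hσ.1.mapsTo hr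
  have hback : Function.invFunOn σ ↑R (σ r) = r := hσ.1.injOn.leftInvOn_invFunOn hr
  have := FWD hd' hR hB hinv hbB hsb (by rw [hback]; exact htr)
  rw [hback] at this
  exact this



open scoped Classical

section
variable {u v x : Pt}

lemma det2_negl (u v : Pt) : det2 (-u) v = - det2 u v := by simp [det2]; ring
lemma det2_negr (u v : Pt) : det2 u (-v) = - det2 u v := by simp [det2]; ring

/-- (+,-) quadrant: antitone ⇒ disjoint -/
lemma SEG1b (hd : det2 u v ≠ 0) {t₁ t₂ s₁ s₂ : ℝ} (ht₁ : 0 < t₁) (ht : t₁ < t₂)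
    (hs₁ : s₁ < 0) (hs : s₂ < s₁) :
    segment ℝ (x + t₁•v) (x + s₁•u) ∩ segment ℝ (x + t₂•v) (x + s₂•u) = ∅ := by
  have hd' : det2 (-u) v ≠ 0 := by rw [det2_negl]; simpa using hd
  have := SEG1 (x := x) hd' ht₁ ht (by linarith : (0:ℝ) < -s₁) (by linarith : -s₁ < -s₂)
  simpa using this

/-- (-,+) quadrant -/
lemma SEG1c (hd : det2 u v ≠ 0) {t₁ t₂ s₁ s₂ : ℝ} (ht : t₁ < t₂) (ht₂ : t₂ < 0)
    (hs₂ : 0 < s₂) (hs : s₂ < s₁) :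
    segment ℝ (x + t₁•v) (x + s₁•u) ∩ segment ℝ (x + t₂•v) (x + s₂•u) = ∅ := by
  have hd' : det2 u (-v) ≠ 0 := by rw [det2_negr]; simpa using hd
  have := SEG1 (x := x) hd' (by linarith : (0:ℝ) < -t₂) (by linarith : -t₂ < -t₁) hs₂ hs
  rw [Set.inter_comm] at this
  simpa using this

/-- (-,-) quadrant -/
lemma SEG1d (hd : det2 u v ≠ 0) {t₁ t₂ s₁ s₂ : ℝ} (ht : t₁ < t₂) (ht₂ : t₂ < 0)
    (hs₂ : s₂ < 0) (hs : s₁ < s₂) :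
    segment ℝ (x + t₁•v) (x + s₁•u) ∩ segment ℝ (x + t₂•v) (x + s₂•u) = ∅ := by
  have hd' : det2 (-u) (-v) ≠ 0 := by rw [det2_negl, det2_negr]; simpa using hd
  have := SEG1 (x := x) hd' (by linarith : (0:ℝ) < -t₂) (by linarith : -t₂ < -t₁)
    (by linarith : (0:ℝ) < -s₂) (by linarith : -s₂ < -s₁)
  rw [Set.inter_comm] at this
  simpa using this
end

lemma rnk_window {A : Finset ℝ} {t : ℝ} (ht : t ∈ A) {lo hi : ℕ}
    (hlo : lo ≤ rnk A t) (hhi : rnk A t ≤ hi) :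
    rnk (A.filter fun z => lo ≤ rnk A z ∧ rnk A z ≤ hi) t = rnk A t - lo := by
  have hcd := rnk_lt_card ht
  have heq : (A.filter fun z => lo ≤ rnk A z ∧ rnk A z ≤ hi).filter (· < t)
      = A.filter (fun z => lo ≤ rnk A z ∧ rnk A z < rnk A t) := by
    ext z
    simp only [Finset.mem_filter]
    constructor
    · rintro ⟨⟨hzA, hzlo, hzhi⟩, hzt⟩
      exact ⟨hzA, hzlo, rnk_lt_rnk hzA ht hzt⟩
    · rintro ⟨hzA, hzlo, hzr⟩
      have hzt : z < t := (rnk_lt_iff hzA ht).1 hzr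
      exact ⟨⟨hzA, hzlo, by omega⟩, hzt⟩
  show ((A.filter fun z => lo ≤ rnk A z ∧ rnk A z ≤ hi).filter (· < t)).card = rnk A t - lo
  rw [heq, rnk_filter_card A (fun i => lo ≤ i ∧ i < rnk A t)]
  have : (Finset.range A.card).filter (fun i => lo ≤ i ∧ i < rnk A t)
      = Finset.Ico lo (rnk A t) := by
    ext i; simp only [Finset.mem_filter, Finset.mem_range, Finset.mem_Ico]; omega
  rw [this, Nat.card_Ico]

/-- card of a rank-window -/
lemma window_card (A : Finset ℝ) {lo hi : ℕ} (hhi : hi < A.card) (hlh : lo ≤ hi) :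
    (A.filter fun z => lo ≤ rnk A z ∧ rnk A z ≤ hi).card = hi + 1 - lo := by
  rw [rnk_filter_card A (fun i => lo ≤ i ∧ i ≤ hi)]
  have : (Finset.range A.card).filter (fun i => lo ≤ i ∧ i ≤ hi) = Finset.Icc lo hi := by
    ext i; simp only [Finset.mem_filter, Finset.mem_range, Finset.mem_Icc]; omega
  rw [this, Nat.card_Icc]

lemma lowrank_card (A : Finset ℝ) {m : ℕ} (hm : m ≤ A.card) :
    (A.filter fun z => rnk A z < m).card = m := by
  rw [rnk_filter_card A (fun i => i < m)]
  have : (Finset.range A.card).filter (fun i => i < m) = Finset.range m := by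
    ext i; simp only [Finset.mem_filter, Finset.mem_range]; omega
  rw [this, Finset.card_range]

lemma filter_neg_card (A : Finset ℝ) (p : ℝ → Prop) [DecidablePred p] :
    (A.filter p).card + (A.filter (fun z => ¬ p z)).card = A.card :=
  Finset.card_filter_add_card_filter_not p



open scoped Classical

lemma BACK {u v x : Pt} {B R : Finset Pt} (hd : det2 u v ≠ 0)
    (hB : ∀ b ∈ B, ∃ t : ℝ, t ≠ 0 ∧ b = x + t • u)
    (hR : ∀ r ∈ R, ∃ t : ℝ, t ≠ 0 ∧ r = x + t • v)
    (hcard : B.card = R.card)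
    {r b : Pt} (hr : r ∈ R) (hb : b ∈ B)
    (htr : 0 < cR u v x r) (hsb : 0 < cR v u x b)
    (h1 : rnk ((prm u v x R).filter (0 < ·)) (cR u v x r) ≤
      rnk ((prm v u x B).filter (0 < ·)) (cR v u x b) +
      ((prm v u x B).filter (· < 0)).card)
    (h2 : rnk ((prm v u x B).filter (0 < ·)) (cR v u x b) ≤
      rnk ((prm u v x R).filter (0 < ·)) (cR u v x r) +
      ((prm u v x R).filter (· < 0)).card) :
    BFeasible B R r b := by
  classical
  have hd' : det2 v u ≠ 0 := by rw [det2_swap]; simpa using hd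
  have hu : u ≠ 0 := by intro h0; rw [h0] at hd; simp [det2] at hd
  have hv : v ≠ 0 := by intro h0; rw [h0] at hd; simp [det2] at hd
  set TR := prm u v x R with hTR
  set SB := prm v u x B with hSB
  set Tp := TR.filter (0 < ·) with hTp
  set Tm := TR.filter (· < 0) with hTm
  set Sp := SB.filter (0 < ·) with hSp
  set Sm := SB.filter (· < 0) with hSm
  set tr := cR u v x r with htrdef
  set sb := cR v u x b with hsbdef
  set α := rnk Tp tr with hα
  set β := rnk Sp sb with hβ
  have htrT : tr ∈ Tp := by
    rw [hTp, Finset.mem_filter]; exact ⟨prm_mem' hd hR hr, htr⟩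
  have hsbS : sb ∈ Sp := by
    rw [hSp, Finset.mem_filter]; exact ⟨prm_mem' hd' hB hb, hsb⟩
  set p := Tp.card with hp
  set q := Tm.card with hq
  set P := Sp.card with hP
  set Q := Sm.card with hQ
  have hαp : α < p := rnk_lt_card htrT
  have hβP : β < P := rnk_lt_card hsbS
  have hTmneg : Tm = TR.filter (fun z => ¬ 0 < z) := by
    rw [hTm]
    ext z
    simp only [Finset.mem_filter]
    constructor
    · rintro ⟨hz, hz'⟩; exact ⟨hz, by linarith⟩
    · rintro ⟨hz, hz'⟩
      refine ⟨hz, ?_⟩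
      have := (prm_mem hd hR (by rwa [hTR] at hz)).2
      rcases lt_trichotomy z 0 with h|h|h
      · exact h
      · exact absurd h this
      · exact absurd h hz'
  have hSmneg : Sm = SB.filter (fun z => ¬ 0 < z) := by
    rw [hSm]
    ext z
    simp only [Finset.mem_filter]
    constructor
    · rintro ⟨hz, hz'⟩; exact ⟨hz, by linarith⟩
    · rintro ⟨hz, hz'⟩
      refine ⟨hz, ?_⟩
      have := (prm_mem hd' hB (by rwa [hSB] at hz)).2
      rcases lt_trichotomy z 0 with h|h|h
      · exact h
      · exact absurd h this
      · exact absurd h hz'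
  have hpq : p + q = R.card := by
    rw [hp, hq, hTmneg, hTp]
    rw [filter_neg_card TR (0 < ·), hTR, prm_card hd hR]
  have hPQ : P + Q = B.card := by
    rw [hP, hQ, hSmneg, hSp]
    rw [filter_neg_card SB (0 < ·), hSB, prm_card hd' hB]
  have hn : p + q = P + Q := by rw [hpq, hPQ, hcard]
  set j := min α β with hj
  set k := min (p-1-α) (P-1-β) with hk
  have hjc := min_choice α β
  have hkc := min_choice (p-1-α) (P-1-β)
  have hjα : j ≤ α := min_le_left _ _
  have hjβ : j ≤ β := min_le_right _ _
  have hkp : k ≤ p-1-α := min_le_left _ _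
  have hkP : k ≤ P-1-β := min_le_right _ _
  set L := j + k + 1 with hL
  have hLp : L ≤ p := by omega
  have hLP : L ≤ P := by omega
  have hPLq : P ≤ L + q := by
    rcases hjc with hj'|hj' <;> rcases hkc with hk'|hk' <;> omega
  have hpLQ : p ≤ L + Q := by
    rcases hjc with hj'|hj' <;> rcases hkc with hk'|hk' <;> omega
  set X := Tp.filter (fun z => α-j ≤ rnk Tp z ∧ rnk Tp z ≤ α+k) with hX
  set S := Sp.filter (fun z => β-j ≤ rnk Sp z ∧ rnk Sp z ≤ β+k) with hS
  set X' := Tp.filter (fun z => ¬(α-j ≤ rnk Tp z ∧ rnk Tp z ≤ α+k)) with hX'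
  set S' := Sp.filter (fun z => ¬(β-j ≤ rnk Sp z ∧ rnk Sp z ≤ β+k)) with hS'
  set Y1 := Tm.filter (fun z => rnk Tm z < P-L) with hY1
  set Y2 := Tm.filter (fun z => ¬(rnk Tm z < P-L)) with hY2
  set Z1 := Sm.filter (fun z => rnk Sm z < p-L) with hZ1
  set Z2 := Sm.filter (fun z => ¬(rnk Sm z < p-L)) with hZ2
  have hXc : X.card = L := by
    have := window_card Tp (lo := α-j) (hi := α+k) (by omega) (by omega)
    rw [hX]; omega
  have hSc : S.card = L := by
    have := window_card Sp (lo := β-j) (hi := β+k) (by omega) (by omega)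
    rw [hS]; omega
  have hX'c : X'.card = p - L := by
    have := filter_neg_card Tp (fun z => α-j ≤ rnk Tp z ∧ rnk Tp z ≤ α+k)
    rw [← hX, ← hX'] at this; omega
  have hS'c : S'.card = P - L := by
    have := filter_neg_card Sp (fun z => β-j ≤ rnk Sp z ∧ rnk Sp z ≤ β+k)
    rw [← hS, ← hS'] at this; omega
  have hY1c : Y1.card = P - L := by
    rw [hY1]; exact lowrank_card Tm (by omega)
  have hZ1c : Z1.card = p - L := by
    rw [hZ1]; exact lowrank_card Sm (by omega)
  have hY2c : Y2.card = q - (P - L) := by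
    have := filter_neg_card Tm (fun z => rnk Tm z < P-L)
    rw [← hY1, ← hY2] at this; omega
  have hZ2c : Z2.card = Q - (p - L) := by
    have := filter_neg_card Sm (fun z => rnk Sm z < p-L)
    rw [← hZ1, ← hZ2] at this; omega
  -- card equalities for the four pieces
  have cXS : X.card = S.card := by omega
  have cX'Z1 : X'.card = Z1.card := by omega
  have cY1S' : Y1.card = S'.card := by omega
  have cY2Z2 : Y2.card = Z2.card := by omega
  -- membership sign facts
  have memX : ∀ z ∈ X, z ∈ Tp := fun z hz => Finset.mem_of_mem_filter z hz
  have memX' : ∀ z ∈ X', z ∈ Tp := fun z hz => Finset.mem_of_mem_filter z hz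
  have memY1 : ∀ z ∈ Y1, z ∈ Tm := fun z hz => Finset.mem_of_mem_filter z hz
  have memY2 : ∀ z ∈ Y2, z ∈ Tm := fun z hz => Finset.mem_of_mem_filter z hz
  have memS : ∀ z ∈ S, z ∈ Sp := fun z hz => Finset.mem_of_mem_filter z hz
  have memS' : ∀ z ∈ S', z ∈ Sp := fun z hz => Finset.mem_of_mem_filter z hz
  have memZ1 : ∀ z ∈ Z1, z ∈ Sm := fun z hz => Finset.mem_of_mem_filter z hz
  have memZ2 : ∀ z ∈ Z2, z ∈ Sm := fun z hz => Finset.mem_of_mem_filter z hz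
  have posTp : ∀ z ∈ Tp, 0 < z ∧ z ∈ TR := fun z hz => by
    rw [hTp, Finset.mem_filter] at hz; exact ⟨hz.2, hz.1⟩
  have negTm : ∀ z ∈ Tm, z < 0 ∧ z ∈ TR := fun z hz => by
    rw [hTm, Finset.mem_filter] at hz; exact ⟨hz.2, hz.1⟩
  have posSp : ∀ z ∈ Sp, 0 < z ∧ z ∈ SB := fun z hz => by
    rw [hSp, Finset.mem_filter] at hz; exact ⟨hz.2, hz.1⟩
  have negSm : ∀ z ∈ Sm, z < 0 ∧ z ∈ SB := fun z hz => by
    rw [hSm, Finset.mem_filter] at hz; exact ⟨hz.2, hz.1⟩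
  -- the matching on parameters
  set F : ℝ → ℝ := fun z =>
    if z ∈ X then mmap X S z else if z ∈ X' then amap X' Z1 z
    else if z ∈ Y1 then amap Y1 S' z else mmap Y2 Z2 z with hF
  have hXX' : ∀ z, z ∈ X → z ∈ X' → False := by
    intro z hz hz'
    rw [hX, Finset.mem_filter] at hz; rw [hX', Finset.mem_filter] at hz'
    exact hz'.2 hz.2
  have hY12 : ∀ z, z ∈ Y1 → z ∈ Y2 → False := by
    intro z hz hz'
    rw [hY1, Finset.mem_filter] at hz; rw [hY2, Finset.mem_filter] at hz'
    exact hz'.2 hz.2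
  have hTpTm : ∀ z, z ∈ Tp → z ∈ Tm → False := by
    intro z hz hz'
    have := (posTp z hz).1; have := (negTm z hz').1; linarith
  have hSpSm : ∀ z, z ∈ Sp → z ∈ Sm → False := by
    intro z hz hz'
    have := (posSp z hz).1; have := (negSm z hz').1; linarith
  have hSS' : ∀ z, z ∈ S → z ∈ S' → False := by
    intro z hz hz'
    rw [hS, Finset.mem_filter] at hz; rw [hS', Finset.mem_filter] at hz'
    exact hz'.2 hz.2
  have hZ12 : ∀ z, z ∈ Z1 → z ∈ Z2 → False := by
    intro z hz hz'
    rw [hZ1, Finset.mem_filter] at hz; rw [hZ2, Finset.mem_filter] at hz'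
    exact hz'.2 hz.2
  have hFX : ∀ z ∈ X, F z = mmap X S z := fun z hz => by
    rw [hF]; simp only [if_pos hz]
  have hFX' : ∀ z ∈ X', F z = amap X' Z1 z := fun z hz => by
    rw [hF]
    have : z ∉ X := fun h => hXX' z h hz
    simp only [if_neg this, if_pos hz]
  have hFY1 : ∀ z ∈ Y1, F z = amap Y1 S' z := fun z hz => by
    rw [hF]
    have h1 : z ∉ X := fun h => hTpTm z (memX z h) (memY1 z hz)
    have h2 : z ∉ X' := fun h => hTpTm z (memX' z h) (memY1 z hz)
    simp only [if_neg h1, if_neg h2, if_pos hz]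
  have hFY2 : ∀ z ∈ Y2, F z = mmap Y2 Z2 z := fun z hz => by
    rw [hF]
    have h1 : z ∉ X := fun h => hTpTm z (memX z h) (memY2 z hz)
    have h2 : z ∉ X' := fun h => hTpTm z (memX' z h) (memY2 z hz)
    have h3 : z ∉ Y1 := fun h => hY12 z h hz
    simp only [if_neg h1, if_neg h2, if_neg h3]
  have hFXm : ∀ z ∈ X, F z ∈ S := fun z hz => (hFX z hz) ▸ mmap_mem cXS hz
  have hFX'm : ∀ z ∈ X', F z ∈ Z1 := fun z hz => (hFX' z hz) ▸ amap_mem cX'Z1 hz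
  have hFY1m : ∀ z ∈ Y1, F z ∈ S' := fun z hz => (hFY1 z hz) ▸ amap_mem cY1S' hz
  have hFY2m : ∀ z ∈ Y2, F z ∈ Z2 := fun z hz => (hFY2 z hz) ▸ mmap_mem cY2Z2 hz
  -- cover
  have cover : ∀ z ∈ TR, z ∈ X ∨ z ∈ X' ∨ z ∈ Y1 ∨ z ∈ Y2 := by
    intro z hz
    have hz0 := (prm_mem hd hR (by rwa [hTR] at hz)).2
    rcases lt_or_gt_of_ne hz0 with hneg | hpos
    · have hzTm : z ∈ Tm := by rw [hTm, Finset.mem_filter]; exact ⟨hz, hneg⟩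
      by_cases h : rnk Tm z < P-L
      · exact Or.inr (Or.inr (Or.inl (by rw [hY1, Finset.mem_filter]; exact ⟨hzTm, h⟩)))
      · exact Or.inr (Or.inr (Or.inr (by rw [hY2, Finset.mem_filter]; exact ⟨hzTm, h⟩)))
    · have hzTp : z ∈ Tp := by rw [hTp, Finset.mem_filter]; exact ⟨hz, hpos⟩
      by_cases h : α-j ≤ rnk Tp z ∧ rnk Tp z ≤ α+k
      · exact Or.inl (by rw [hX, Finset.mem_filter]; exact ⟨hzTp, h⟩)
      · exact Or.inr (Or.inl (by rw [hX', Finset.mem_filter]; exact ⟨hzTp, h⟩))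
  -- r and b are in the windows
  have htrX : tr ∈ X := by
    rw [hX, Finset.mem_filter]
    exact ⟨htrT, by omega, by omega⟩
  have hsbSw : sb ∈ S := by
    rw [hS, Finset.mem_filter]
    exact ⟨hsbS, by omega, by omega⟩
  -- F tr = sb
  have hFtr : F tr = sb := by
    rw [hFX tr htrX]
    have e1 : rnk S (mmap X S tr) = rnk X tr := rnk_mmap cXS htrX
    have e2 : rnk X tr = j := by
      have := rnk_window (A := Tp) htrT (lo := α-j) (hi := α+k) (by omega) (by omega)
      rw [hX]
      rw [← hα] at this
      rw [this]; omega
    have e3 : rnk S sb = j := by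
      have := rnk_window (A := Sp) hsbS (lo := β-j) (hi := β+k) (by omega) (by omega)
      rw [hS]
      rw [← hβ] at this
      rw [this]; omega
    exact rnk_injOn (mmap_mem cXS htrX) hsbSw (by rw [e1, e2, e3])
  -- BijOn F TR SB
  have hSsub : ∀ z ∈ S, z ∈ SB := fun z hz => (posSp z (memS z hz)).2
  have hS'sub : ∀ z ∈ S', z ∈ SB := fun z hz => (posSp z (memS' z hz)).2
  have hZ1sub : ∀ z ∈ Z1, z ∈ SB := fun z hz => (negSm z (memZ1 z hz)).2
  have hZ2sub : ∀ z ∈ Z2, z ∈ SB := fun z hz => (negSm z (memZ2 z hz)).2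
  -- pairwise value-disjointness
  have imdisj : ∀ w, (w ∈ S → w ∈ S' → False) ∧ (w ∈ S → w ∈ Z1 → False) ∧
      (w ∈ S → w ∈ Z2 → False) ∧ (w ∈ S' → w ∈ Z1 → False) ∧
      (w ∈ S' → w ∈ Z2 → False) ∧ (w ∈ Z1 → w ∈ Z2 → False) := by
    intro w
    refine ⟨hSS' w, ?_, ?_, ?_, ?_, hZ12 w⟩
    · exact fun h h' => hSpSm w (memS w h) (memZ1 w h')
    · exact fun h h' => hSpSm w (memS w h) (memZ2 w h')
    · exact fun h h' => hSpSm w (memS' w h) (memZ1 w h')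
    · exact fun h h' => hSpSm w (memS' w h) (memZ2 w h')
  have hFbij : Set.BijOn F ↑TR ↑SB := by
    refine ⟨?_, ?_, ?_⟩
    · intro z hz
      rcases cover z hz with h|h|h|h
      · exact hSsub _ (hFXm z h)
      · exact hZ1sub _ (hFX'm z h)
      · exact hS'sub _ (hFY1m z h)
      · exact hZ2sub _ (hFY2m z h)
    · intro z hz z' hz' heq
      simp only [Finset.mem_coe] at hz hz'
      rcases cover z hz with h|h|h|h <;> rcases cover z' hz' with h'|h'|h'|h'
      · exact (mmap_bijOn cXS).injOn (by exact h) (by exact h')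
          (by rw [← hFX z h, ← hFX z' h', heq])
      · exact absurd heq (fun e => (imdisj (F z)).2.1 (hFXm z h) (e ▸ hFX'm z' h'))
      · exact absurd heq (fun e => (imdisj (F z)).1 (hFXm z h) (e ▸ hFY1m z' h'))
      · exact absurd heq (fun e => (imdisj (F z)).2.2.1 (hFXm z h) (e ▸ hFY2m z' h'))
      · exact absurd heq (fun e => (imdisj (F z')).2.1 (hFXm z' h') (e ▸ hFX'm z h))
      · exact (amap_bijOn cX'Z1).injOn (by exact h) (by exact h')
          (by rw [← hFX' z h, ← hFX' z' h', heq])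
      · exact absurd heq (fun e => (imdisj (F z)).2.2.2.1 (e ▸ hFY1m z' h') (hFX'm z h))
      · exact absurd heq (fun e => (imdisj (F z)).2.2.2.2.2 (hFX'm z h) (e ▸ hFY2m z' h'))
      · exact absurd heq (fun e => (imdisj (F z')).1 (hFXm z' h') (e ▸ hFY1m z h))
      · exact absurd heq (fun e => (imdisj (F z)).2.2.2.1 (hFY1m z h) (e ▸ hFX'm z' h'))
      · exact (amap_bijOn cY1S').injOn (by exact h) (by exact h')
          (by rw [← hFY1 z h, ← hFY1 z' h', heq])
      · exact absurd heq (fun e => (imdisj (F z)).2.2.2.2.1 (hFY1m z h) (e ▸ hFY2m z' h'))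
      · exact absurd heq (fun e => (imdisj (F z')).2.2.1 (hFXm z' h') (e ▸ hFY2m z h))
      · exact absurd heq (fun e => (imdisj (F z')).2.2.2.2.2 (hFX'm z' h') (e ▸ hFY2m z h))
      · exact absurd heq (fun e => (imdisj (F z')).2.2.2.2.1 (hFY1m z' h') (e ▸ hFY2m z h))
      · exact (mmap_bijOn cY2Z2).injOn (by exact h) (by exact h')
          (by rw [← hFY2 z h, ← hFY2 z' h', heq])
    · intro w hw
      simp only [Finset.mem_coe] at hw
      have hw0 := (prm_mem hd' hB (by rwa [hSB] at hw)).2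
      rcases lt_or_gt_of_ne hw0 with hneg | hpos
      · have hwSm : w ∈ Sm := by rw [hSm, Finset.mem_filter]; exact ⟨hw, hneg⟩
        by_cases hcase : rnk Sm w < p-L
        · have hwZ1 : w ∈ Z1 := by rw [hZ1, Finset.mem_filter]; exact ⟨hwSm, hcase⟩
          obtain ⟨z, hz, hzw⟩ := (amap_bijOn cX'Z1).surjOn (by exact hwZ1)
          refine ⟨z, ?_, by rw [hFX' z hz]; exact hzw⟩
          exact Finset.mem_coe.2 ((posTp z (memX' z hz)).2)
        · have hwZ2 : w ∈ Z2 := by rw [hZ2, Finset.mem_filter]; exact ⟨hwSm, hcase⟩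
          obtain ⟨z, hz, hzw⟩ := (mmap_bijOn cY2Z2).surjOn (by exact hwZ2)
          refine ⟨z, ?_, by rw [hFY2 z hz]; exact hzw⟩
          exact Finset.mem_coe.2 ((negTm z (memY2 z hz)).2)
      · have hwSp : w ∈ Sp := by rw [hSp, Finset.mem_filter]; exact ⟨hw, hpos⟩
        by_cases hcase : β-j ≤ rnk Sp w ∧ rnk Sp w ≤ β+k
        · have hwS : w ∈ S := by rw [hS, Finset.mem_filter]; exact ⟨hwSp, hcase⟩
          obtain ⟨z, hz, hzw⟩ := (mmap_bijOn cXS).surjOn (by exact hwS)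
          refine ⟨z, ?_, by rw [hFX z hz]; exact hzw⟩
          exact Finset.mem_coe.2 ((posTp z (memX z hz)).2)
        · have hwS' : w ∈ S' := by rw [hS', Finset.mem_filter]; exact ⟨hwSp, hcase⟩
          obtain ⟨z, hz, hzw⟩ := (amap_bijOn cY1S').surjOn (by exact hwS')
          refine ⟨z, ?_, by rw [hFY1 z hz]; exact hzw⟩
          exact Finset.mem_coe.2 ((negTm z (memY1 z hz)).2)
  -- sign of values
  have sFX : ∀ z ∈ X, 0 < F z := fun z hz => (posSp _ (memS _ (hFXm z hz))).1
  have sFX' : ∀ z ∈ X', F z < 0 := fun z hz => (negSm _ (memZ1 _ (hFX'm z hz))).1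
  have sFY1 : ∀ z ∈ Y1, 0 < F z := fun z hz => (posSp _ (memS' _ (hFY1m z hz))).1
  have sFY2 : ∀ z ∈ Y2, F z < 0 := fun z hz => (negSm _ (memZ2 _ (hFY2m z hz))).1
  have tX : ∀ z ∈ X, 0 < z := fun z hz => (posTp z (memX z hz)).1
  have tX' : ∀ z ∈ X', 0 < z := fun z hz => (posTp z (memX' z hz)).1
  have tY1 : ∀ z ∈ Y1, z < 0 := fun z hz => (negTm z (memY1 z hz)).1
  have tY2 : ∀ z ∈ Y2, z < 0 := fun z hz => (negTm z (memY2 z hz)).1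
  -- noncrossing at parameter level
  have key : ∀ z ∈ TR, ∀ z' ∈ TR, z ≠ z' →
      segment ℝ (x+z•v) (x+(F z)•u) ∩ segment ℝ (x+z'•v) (x+(F z')•u) = ∅ := by
    have mm : ∀ z ∈ X, ∀ z' ∈ X, z < z' →
        segment ℝ (x+z•v) (x+(F z)•u) ∩ segment ℝ (x+z'•v) (x+(F z')•u) = ∅ := by
      intro z hz z' hz' hlt
      have := mmap_lt cXS hz hz' hlt
      rw [← hFX z hz, ← hFX z' hz'] at this
      exact SEG1 hd (tX z hz) hlt (sFX z hz) this
    have xx : ∀ z ∈ X', ∀ z' ∈ X', z < z' →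
        segment ℝ (x+z•v) (x+(F z)•u) ∩ segment ℝ (x+z'•v) (x+(F z')•u) = ∅ := by
      intro z hz z' hz' hlt
      have := amap_lt cX'Z1 hz hz' hlt
      rw [← hFX' z hz, ← hFX' z' hz'] at this
      exact SEG1b hd (tX' z hz) hlt (sFX' z hz) this
    have yy : ∀ z ∈ Y1, ∀ z' ∈ Y1, z < z' →
        segment ℝ (x+z•v) (x+(F z)•u) ∩ segment ℝ (x+z'•v) (x+(F z')•u) = ∅ := by
      intro z hz z' hz' hlt
      have := amap_lt cY1S' hz hz' hlt
      rw [← hFY1 z hz, ← hFY1 z' hz'] at this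
      exact SEG1c hd hlt (tY1 z' hz') (sFY1 z' hz') this
    have ww : ∀ z ∈ Y2, ∀ z' ∈ Y2, z < z' →
        segment ℝ (x+z•v) (x+(F z)•u) ∩ segment ℝ (x+z'•v) (x+(F z')•u) = ∅ := by
      intro z hz z' hz' hlt
      have := mmap_lt cY2Z2 hz hz' hlt
      rw [← hFY2 z hz, ← hFY2 z' hz'] at this
      exact SEG1d hd hlt (tY2 z' hz') (sFY2 z' hz') this
    have samepiece : ∀ (W : Finset ℝ), (∀ z ∈ W, ∀ z' ∈ W, z < z' →
        segment ℝ (x+z•v) (x+(F z)•u) ∩ segment ℝ (x+z'•v) (x+(F z')•u) = ∅) →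
        ∀ z ∈ W, ∀ z' ∈ W, z ≠ z' →
        segment ℝ (x+z•v) (x+(F z)•u) ∩ segment ℝ (x+z'•v) (x+(F z')•u) = ∅ := by
      intro W hW z hz z' hz' hne
      rcases lt_trichotomy z z' with h|h|h
      · exact hW z hz z' hz' h
      · exact absurd h hne
      · rw [Set.inter_comm]; exact hW z' hz' z hz h
    intro z hz z' hz' hne
    have hFne : F z ≠ F z' := fun e =>
      hne (hFbij.injOn (Finset.mem_coe.2 hz) (Finset.mem_coe.2 hz') e)
    rcases cover z hz with h|h|h|h <;> rcases cover z' hz' with h'|h'|h'|h'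
    · exact samepiece X mm z h z' h' hne
    · exact SEG2 hd hne (sFX z h) (sFX' z' h')
    · exact SEG3 hd (tX z h) (tY1 z' h') hFne
    · exact SEG3 hd (tX z h) (tY2 z' h') hFne
    · rw [Set.inter_comm]; exact SEG2 hd (Ne.symm hne) (sFX z' h') (sFX' z h)
    · exact samepiece X' xx z h z' h' hne
    · exact SEG3 hd (tX' z h) (tY1 z' h') hFne
    · exact SEG3 hd (tX' z h) (tY2 z' h') hFne
    · rw [Set.inter_comm]; exact SEG3 hd (tX z' h') (tY1 z h) (Ne.symm hFne)
    · rw [Set.inter_comm]; exact SEG3 hd (tX' z' h') (tY1 z h) (Ne.symm hFne)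
    · exact samepiece Y1 yy z h z' h' hne
    · exact SEG2 hd hne (sFY1 z h) (sFY2 z' h')
    · rw [Set.inter_comm]; exact SEG3 hd (tX z' h') (tY2 z h) (Ne.symm hFne)
    · rw [Set.inter_comm]; exact SEG3 hd (tX' z' h') (tY2 z h) (Ne.symm hFne)
    · rw [Set.inter_comm]; exact SEG2 hd (Ne.symm hne) (sFY1 z' h') (sFY2 z h)
    · exact samepiece Y2 ww z h z' h' hne
  -- assemble the matching
  refine ⟨fun y => x + (F (cR u v x y)) • u, ⟨?_, ?_⟩, ?_⟩
  · -- BijOn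
    have bc : Set.BijOn (cR u v x) (↑R : Set Pt) (↑TR : Set ℝ) := by
      refine ⟨fun y hy => Finset.mem_coe.2 (prm_mem' hd hR hy), ?_, ?_⟩
      · intro a ha b hb h
        exact param_injOn hd hR (Finset.mem_coe.1 ha) (Finset.mem_coe.1 hb) h
      · intro z hz
        obtain ⟨y, hy, rfl⟩ := Finset.mem_image.1 (Finset.mem_coe.1 hz)
        exact ⟨y, Finset.mem_coe.2 hy, rfl⟩
    have bp : Set.BijOn (fun s => x + s•u) (↑SB : Set ℝ) (↑B : Set Pt) := by
      refine ⟨?_, ?_, ?_⟩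
      · intro z hz
        exact Finset.mem_coe.2 ((prm_mem hd' hB (Finset.mem_coe.1 hz)).1)
      · intro a _ b _ h
        simp only [add_right_inj] at h
        exact smul_left_injective ℝ hu h
      · intro y hy
        have := param_pt hd' hB (Finset.mem_coe.1 hy)
        exact ⟨cR v u x y, Finset.mem_coe.2 (prm_mem' hd' hB (Finset.mem_coe.1 hy)),
          this.1.symm⟩
    exact (bp.comp (hFbij.comp bc))
  · -- noncrossing
    intro y hy y' hy' hne
    have hyp := param_pt hd hR hy
    have hyp' := param_pt hd hR hy'
    have htne : cR u v x y ≠ cR u v x y' := fun e => hne (param_injOn hd hR hy hy' e)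
    have := key (cR u v x y) (prm_mem' hd hR hy) (cR u v x y') (prm_mem' hd hR hy') htne
    calc segment ℝ y (x + (F (cR u v x y))•u) ∩ segment ℝ y' (x + (F (cR u v x y'))•u)
        = segment ℝ (x + (cR u v x y)•v) (x + (F (cR u v x y))•u) ∩
          segment ℝ (x + (cR u v x y')•v) (x + (F (cR u v x y'))•u) := by
          rw [← hyp.1, ← hyp'.1]
    _ = ∅ := this
  · -- σ r = b
    show x + (F tr) • u = b
    rw [hFtr]
    exact (param_pt hd' hB hb).1.symm



open scoped Classical

lemma dist_sq_pt (y z : Pt) : (dist y z)^2 = (y 0 - z 0)^2 + (y 1 - z 1)^2 := by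
  rw [EuclideanSpace.dist_eq, Real.sq_sqrt (by positivity)]
  simp [Fin.sum_univ_two, Real.dist_eq, sq_abs]

lemma bisector {x r' b b' : Pt} {θ : ℝ} (h0 : 0 < θ) (h1 : θ < 1)
    (hx : dist x b' < dist x b) (hr' : dist r' b' ≤ dist r' b) :
    dist ((1-θ)•x + θ•r') b' < dist ((1-θ)•x + θ•r') b := by
  apply lt_of_pow_lt_pow_left₀ 2 dist_nonneg
  have hx2 : (dist x b')^2 < (dist x b)^2 := by
    apply pow_lt_pow_left₀ hx dist_nonneg
    exact two_ne_zero
  have hr2 : (dist r' b')^2 ≤ (dist r' b)^2 := pow_le_pow_left₀ dist_nonneg hr' 2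
  rw [dist_sq_pt, dist_sq_pt] at hx2 hr2 ⊢
  have hc0 : ((1-θ)•x + θ•r' : Pt) 0 = (1-θ) * x 0 + θ * r' 0 := by
    simp [PiLp.add_apply, PiLp.smul_apply, smul_eq_mul]
  have hc1 : ((1-θ)•x + θ•r' : Pt) 1 = (1-θ) * x 1 + θ * r' 1 := by
    simp [PiLp.add_apply, PiLp.smul_apply, smul_eq_mul]
  rw [hc0, hc1]
  nlinarith [mul_lt_mul_of_pos_left hx2 (by linarith : (0:ℝ) < 1-θ),
    mul_le_mul_of_nonneg_left hr2 h0.le]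

lemma cR_negv (u v x y : Pt) : cR u (-v) x y = - cR u v x y := by
  rw [cR, cR, det2_negr, div_neg]


end Aux

/-- Let `P = B ∪ R` be a doubly collinear point set and `l'` one of the two
blue half-lines. Let `r, r' ∈ R` with `r` strictly between `x` and `r'`. If `b` is a closest
point to `r` among the points of `B ∩ l'` forming a feasible edge with `r`, and `b'` is a
closest point to `r'` among the points of `B ∩ l'` forming a feasible edge with `r'`, then
`b' = b` or `b` lies strictly between `x` and `b'`. -/
theorem dc_closest_feasible_monotone (n : ℕ) (x u v : Pt) (hu : u ≠ 0) (hv : v ≠ 0)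
    (hnp : det2 u v ≠ 0) (B R : Finset Pt)
    (hB : ∀ b ∈ B, ∃ t : ℝ, t ≠ 0 ∧ b = x + t • u)
    (hR : ∀ r ∈ R, ∃ t : ℝ, t ≠ 0 ∧ r = x + t • v)
    (hcB : B.card = n) (hcR : R.card = n)
    (l' : Set Pt) (hl' : l' = halfLine x u ∨ l' = halfLine x (-u))
    (r r' : Pt) (hr : r ∈ R) (hr' : r' ∈ R) (hbetween : r ∈ openSegment ℝ x r')
    (b : Pt) (hbB : b ∈ B) (hbl : b ∈ l') (hbf : BFeasible B R r b)
    (hbmin : ∀ b'' ∈ B, b'' ∈ l' → BFeasible B R r b'' → dist r b ≤ dist r b'')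
    (b' : Pt) (hb'B : b' ∈ B) (hb'l : b' ∈ l') (hb'f : BFeasible B R r' b')
    (hb'min : ∀ b'' ∈ B, b'' ∈ l' → BFeasible B R r' b'' → dist r' b' ≤ dist r' b'') :
    b' = b ∨ b ∈ openSegment ℝ x b' := by
  classical
  -- orientation of u
  obtain ⟨u₀, hl0, hBu, hd1⟩ : ∃ u₀ : Pt, l' = halfLine x u₀ ∧
      (∀ b ∈ B, ∃ t : ℝ, t ≠ 0 ∧ b = x + t • u₀) ∧ det2 u₀ v ≠ 0 := by
    rcases hl' with h|h
    · exact ⟨u, h, hB, hnp⟩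
    · refine ⟨-u, h, ?_, ?_⟩
      · intro c hc; obtain ⟨t, ht, rfl⟩ := hB c hc
        exact ⟨-t, neg_ne_zero.2 ht, by simp⟩
      · rw [det2_negl]; simpa using hnp
  -- orientation of v
  have hr'0 : cR u₀ v x r' ≠ 0 := (param_pt hd1 hR hr').2
  obtain ⟨v₀, hRv, hd, htr'⟩ : ∃ v₀ : Pt, (∀ rr ∈ R, ∃ t : ℝ, t ≠ 0 ∧ rr = x + t • v₀) ∧
      det2 u₀ v₀ ≠ 0 ∧ 0 < cR u₀ v₀ x r' := by
    rcases lt_or_gt_of_ne hr'0 with hneg|hpos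
    · refine ⟨-v, ?_, ?_, ?_⟩
      · intro rr hrr; obtain ⟨t, ht, rfl⟩ := hR rr hrr
        exact ⟨-t, neg_ne_zero.2 ht, by simp⟩
      · rw [det2_negr]; simpa using hd1
      · rw [cR_negv]; linarith
    · exact ⟨v, hR, hd1, hpos⟩
  have hd' : det2 v₀ u₀ ≠ 0 := by rw [det2_swap]; simpa using hd
  have hu₀ : u₀ ≠ 0 := by intro h0; rw [h0] at hd; simp [det2] at hd
  -- red parameters
  have ht'R : r' = x + (cR u₀ v₀ x r')•v₀ := (param_pt hd hRv hr').1
  rw [openSegment_eq_image] at hbetween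
  obtain ⟨θ, hθ, hrc⟩ := hbetween
  have hrparam : r = x + (θ * cR u₀ v₀ x r')•v₀ := by
    rw [← hrc]
    nth_rewrite 1 [ht'R]
    module
  have htr : cR u₀ v₀ x r = θ * cR u₀ v₀ x r' := by rw [hrparam, cR_param hd]
  have htrpos : 0 < cR u₀ v₀ x r := by rw [htr]; exact mul_pos hθ.1 htr'
  have htrlt : cR u₀ v₀ x r < cR u₀ v₀ x r' := by
    rw [htr]; nlinarith [hθ.1, hθ.2, htr']
  -- blue parameters
  rw [hl0] at hbl hb'l
  obtain ⟨s, hspos, hbeq⟩ := hbl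
  obtain ⟨s', hs'pos, hb'eq⟩ := hb'l
  have hsb : cR v₀ u₀ x b = s := by rw [hbeq, cR_param hd']
  have hsb' : cR v₀ u₀ x b' = s' := by rw [hb'eq, cR_param hd']
  have hsbpos : 0 < cR v₀ u₀ x b := by rw [hsb]; exact hspos
  have hsb'pos : 0 < cR v₀ u₀ x b' := by rw [hsb']; exact hs'pos
  -- rank inequalities from the two given matchings
  have H1 : rnk ((prm u₀ v₀ x R).filter (0 < ·)) (cR u₀ v₀ x r) ≤
      rnk ((prm v₀ u₀ x B).filter (0 < ·)) (cR v₀ u₀ x b) +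
      ((prm v₀ u₀ x B).filter (· < 0)).card ∧
      rnk ((prm v₀ u₀ x B).filter (0 < ·)) (cR v₀ u₀ x b) ≤
      rnk ((prm u₀ v₀ x R).filter (0 < ·)) (cR u₀ v₀ x r) +
      ((prm u₀ v₀ x R).filter (· < 0)).card := by
    obtain ⟨σ, hσ, hσr⟩ := hbf
    have := BOTH hd hBu hRv hσ hr htrpos (by rw [hσr]; exact hsbpos)
    rw [hσr] at this
    exact this
  have H2 : rnk ((prm u₀ v₀ x R).filter (0 < ·)) (cR u₀ v₀ x r') ≤
      rnk ((prm v₀ u₀ x B).filter (0 < ·)) (cR v₀ u₀ x b') +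
      ((prm v₀ u₀ x B).filter (· < 0)).card ∧
      rnk ((prm v₀ u₀ x B).filter (0 < ·)) (cR v₀ u₀ x b') ≤
      rnk ((prm u₀ v₀ x R).filter (0 < ·)) (cR u₀ v₀ x r') +
      ((prm u₀ v₀ x R).filter (· < 0)).card := by
    obtain ⟨σ, hσ, hσr⟩ := hb'f
    have := BOTH hd hBu hRv hσ hr' htr' (by rw [hσr]; exact hsb'pos)
    rw [hσr] at this
    exact this
  rcases lt_trichotomy (cR v₀ u₀ x b) (cR v₀ u₀ x b') with hlt|heq|hgt
  · -- b strictly between x and b'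
    right
    rw [openSegment_eq_image]
    refine ⟨s / s', ⟨by positivity, by rw [div_lt_one hs'pos]; rw [hsb, hsb'] at hlt; exact hlt⟩, ?_⟩
    show (1 - s / s') • x + (s / s') • b' = b
    rw [hb'eq, hbeq, smul_add, smul_smul, div_mul_cancel₀ s (ne_of_gt hs'pos)]
    module
  · -- equal : b' = b
    exact Or.inl (param_injOn hd' hBu hb'B hbB heq.symm)
  · -- impossible
    exfalso
    have hTmem : cR u₀ v₀ x r ∈ (prm u₀ v₀ x R).filter (0 < ·) :=
      Finset.mem_filter.2 ⟨prm_mem' hd hRv hr, htrpos⟩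
    have hTmem' : cR u₀ v₀ x r' ∈ (prm u₀ v₀ x R).filter (0 < ·) :=
      Finset.mem_filter.2 ⟨prm_mem' hd hRv hr', htr'⟩
    have hSmem : cR v₀ u₀ x b ∈ (prm v₀ u₀ x B).filter (0 < ·) :=
      Finset.mem_filter.2 ⟨prm_mem' hd' hBu hbB, hsbpos⟩
    have hSmem' : cR v₀ u₀ x b' ∈ (prm v₀ u₀ x B).filter (0 < ·) :=
      Finset.mem_filter.2 ⟨prm_mem' hd' hBu hb'B, hsb'pos⟩
    have hαα : rnk ((prm u₀ v₀ x R).filter (0 < ·)) (cR u₀ v₀ x r) <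
        rnk ((prm u₀ v₀ x R).filter (0 < ·)) (cR u₀ v₀ x r') :=
      rnk_lt_rnk hTmem hTmem' htrlt
    have hββ : rnk ((prm v₀ u₀ x B).filter (0 < ·)) (cR v₀ u₀ x b') <
        rnk ((prm v₀ u₀ x B).filter (0 < ·)) (cR v₀ u₀ x b) :=
      rnk_lt_rnk hSmem' hSmem hgt
    have hcard : B.card = R.card := by rw [hcB, hcR]
    have feas1 : BFeasible B R r b' :=
      BACK hd hBu hRv hcard hr hb'B htrpos hsb'pos (by omega) (by omega)
    have feas2 : BFeasible B R r' b :=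
      BACK hd hBu hRv hcard hr' hbB htr' hsbpos (by omega) (by omega)
    have d1 : dist r b ≤ dist r b' := hbmin b' hb'B (by rw [hl0]; exact ⟨s', hs'pos, hb'eq⟩) feas1
    have d2 : dist r' b' ≤ dist r' b := hb'min b hbB (by rw [hl0]; exact ⟨s, hspos, hbeq⟩) feas2
    have hxdist : dist x b' < dist x b := by
      rw [hbeq, hb'eq, dist_self_add_right, dist_self_add_right, norm_smul, norm_smul]
      have : ‖u₀‖ > 0 := norm_pos_iff.2 hu₀
      rw [Real.norm_eq_abs, Real.norm_eq_abs, abs_of_pos hspos, abs_of_pos hs'pos]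
      apply mul_lt_mul_of_pos_right _ this
      rw [hsb, hsb'] at hgt
      exact hgt
    have hrc' : (1-θ)•x + θ•r' = r := hrc
    have hbis := bisector hθ.1 hθ.2 hxdist d2
    rw [hrc'] at hbis
    linarith
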